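/- Let H_α be the Hermitian adjacency matrix of an oriented tree T (each edge weighted by a complex number of modulus 1 in one direction and its conjugate in the other) and H_0 the adjacency matrix of the underlying undirected tree. Then for all t ∈ ℝ and all vertices a, b, |(exp(i t H_α))_{b,a}| = |(exp(i t H_0))_{b,a}|. In particular, adding orientations to a tree does not change vertex-to-vertex transfer probabilities. -/

import Mathlib

open Matrix

namespace OrientedTreeAux

variable {V : Type*} [Fintype V] [DecidableEq V] {T : SimpleGraph V}

/-- Product of `Hα v u` over the edges `u → v` of a walk. -/
def wt (Hα : Matrix V V ℂ) : ∀ {u v : V}, T.Walk u v → ℂ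
  | _, _, SimpleGraph.Walk.nil => 1
  | _, _, @SimpleGraph.Walk.cons _ _ u c _ _ p => Hα c u * wt Hα p

lemma wt_nil (Hα : Matrix V V ℂ) (u : V) :
    wt Hα (SimpleGraph.Walk.nil : T.Walk u u) = 1 := rfl

lemma wt_cons (Hα : Matrix V V ℂ) {u c v : V} (h : T.Adj u c) (p : T.Walk c v) :
    wt Hα (SimpleGraph.Walk.cons h p) = Hα c u * wt Hα p := rfl

lemma wt_append (Hα : Matrix V V ℂ) {u v w : V} (p : T.Walk u v) (q : T.Walk v w) :
    wt Hα (p.append q) = wt Hα p * wt Hα q := by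
  induction p with
  | nil => simp [wt_nil]
  | cons h p ih => simp [wt_cons, ih, mul_assoc]

lemma wt_concat (Hα : Matrix V V ℂ) {u v w : V} (p : T.Walk u v) (h : T.Adj v w) :
    wt Hα (p.concat h) = wt Hα p * Hα w v := by
  rw [SimpleGraph.Walk.concat_eq_append, wt_append, wt_cons, wt_nil]
  ring

lemma abs_wt (Hα : Matrix V V ℂ)
    (hmod : ∀ a b : V, T.Adj a b → ‖Hα a b‖ = 1)
    {u v : V} (p : T.Walk u v) : ‖wt Hα p‖ = 1 := by
  induction p with
  | nil => simp [wt_nil]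
  | cons h p ih => rw [wt_cons, norm_mul, ih, hmod _ _ h.symm, one_mul]

end OrientedTreeAux

open OrientedTreeAux

/-- **Orientations do not affect transfer probabilities on trees.**
Let `T` be a tree, `Hα` a Hermitian matrix with zero diagonal supported on the edges of
`T` with modulus-`1` weights on the edges, and `H₀` the adjacency matrix of `T`.  Then
for all times `t` and vertices `a`, `b`, the moduli of the `(b,a)` entries of
`exp(i t Hα)` and `exp(i t H₀)` agree. -/
theorem oriented_tree_same_transfer_probability {V : Type*} [Fintype V] [DecidableEq V]
    (T : SimpleGraph V) [DecidableRel T.Adj] (hT : T.IsTree)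
    (Hα : Matrix V V ℂ) (hHerm : Hα.IsHermitian)
    (hdiag : ∀ a : V, Hα a a = 0)
    (hsupp : ∀ a b : V, a ≠ b → ¬ T.Adj a b → Hα a b = 0)
    (hmod : ∀ a b : V, T.Adj a b → ‖Hα a b‖ = 1)
    (H₀ : Matrix V V ℂ) (hH₀ : H₀ = fun a b : V => if T.Adj a b then (1 : ℂ) else 0) :
    ∀ (t : ℝ) (a b : V),
      ‖NormedSpace.exp ((Complex.I * t) • Hα) b a‖ =
      ‖NormedSpace.exp ((Complex.I * t) • H₀) b a‖ := by
  classical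
  have hne : Nonempty V := hT.isConnected.nonempty
  obtain ⟨r⟩ := hne
  -- unique paths from the root
  have huniq := hT.existsUnique_path
  set P : ∀ a : V, T.Walk r a := fun a => (huniq r a).choose with hP
  have hPpath : ∀ a : V, (P a).IsPath := fun a => (huniq r a).choose_spec.1
  have hPuniq : ∀ (a : V) (q : T.Walk r a), q.IsPath → q = P a :=
    fun a q hq => (huniq r a).choose_spec.2 q hq
  -- diagonal entries
  set d : V → ℂ := fun a => wt Hα (P a) with hd
  have habsd : ∀ a, ‖d a‖ = 1 := fun a => abs_wt Hα hmod _
  -- key relation on edges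
  have hkey : ∀ a b : V, T.Adj a b → (starRingEnd ℂ) (d a) * Hα a b * d b = 1 := by
    intro a b hab
    have hba : star (Hα a b) = Hα b a := hHerm.apply b a
    have hsq : ∀ z : ℂ, ‖z‖ = 1 → (starRingEnd ℂ) z * z = 1 := by
      intro z hz
      have h1 : Complex.normSq z = 1 := by rw [Complex.normSq_eq_norm_sq, hz]; norm_num
      rw [mul_comm, Complex.mul_conj, h1, Complex.ofReal_one]
    have hHsq : Hα a b * Hα b a = 1 := by
      rw [← hba, mul_comm]
      exact hsq _ (hmod a b hab)
    by_cases hb : b ∈ (P a).support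
    · -- P a = (P b).concat hab.symm
      have htake : (P a).takeUntil b hb = P b := hPuniq b _ ((hPpath a).takeUntil hb)
      have hdrop : (P a).dropUntil b hb = SimpleGraph.Walk.cons hab.symm SimpleGraph.Walk.nil := by
        have h1 : ((P a).dropUntil b hb).IsPath := (hPpath a).dropUntil hb
        have h2 : (SimpleGraph.Walk.cons hab.symm (SimpleGraph.Walk.nil : T.Walk a a)).IsPath := by
          simp [hab.ne']
        exact (hT.existsUnique_path b a).unique h1 h2
      have hPa : P a = ((P b).concat hab.symm) := by
        rw [SimpleGraph.Walk.concat_eq_append, ← htake, ← hdrop,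
          SimpleGraph.Walk.take_spec]
      have hda : d a = d b * Hα a b := by
        show wt Hα (P a) = wt Hα (P b) * Hα a b
        rw [hPa, wt_concat]
      rw [hda, RingHom.map_mul]
      calc (starRingEnd ℂ) (d b) * (starRingEnd ℂ) (Hα a b) * Hα a b * d b
          = ((starRingEnd ℂ) (d b) * d b) * ((starRingEnd ℂ) (Hα a b) * Hα a b) := by ring
        _ = 1 := by rw [hsq _ (habsd b), hsq _ (hmod a b hab), one_mul]
    · -- P b = (P a).concat hab
      have hPb : P b = (P a).concat hab := by
        refine (hPuniq b _ ?_).symm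
        have hcons : (SimpleGraph.Walk.cons hab.symm (P a).reverse).IsPath := by
          refine SimpleGraph.Walk.IsPath.cons ((hPpath a).reverse) ?_
          simpa using hb
        have hrev : ((P a).concat hab).reverse = SimpleGraph.Walk.cons hab.symm (P a).reverse := by
          simp [SimpleGraph.Walk.concat_eq_append]
        rw [← SimpleGraph.Walk.isPath_reverse_iff, hrev]
        exact hcons
      have hdb : d b = d a * Hα b a := by
        show wt Hα (P b) = wt Hα (P a) * Hα b a
        rw [hPb, wt_concat]
      rw [hdb]
      calc (starRingEnd ℂ) (d a) * Hα a b * (d a * Hα b a)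
          = ((starRingEnd ℂ) (d a) * d a) * (Hα a b * Hα b a) := by ring
        _ = 1 := by rw [hsq _ (habsd a), hHsq, one_mul]
  -- the diagonal unitary
  set D : Matrix V V ℂ := Matrix.diagonal d with hD
  set Dc : Matrix V V ℂ := Matrix.diagonal (fun a => (starRingEnd ℂ) (d a)) with hDc
  have hone : ∀ a : V, d a * (starRingEnd ℂ) (d a) = 1 := by
    intro a
    have h1 : Complex.normSq (d a) = 1 := by rw [Complex.normSq_eq_norm_sq, habsd a]; norm_num
    rw [Complex.mul_conj, h1, Complex.ofReal_one]
  have hone' : ∀ a : V, (starRingEnd ℂ) (d a) * d a = 1 := fun a => by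
    rw [mul_comm]; exact hone a
  have hDDc : D * Dc = 1 := by
    rw [hD, hDc, Matrix.diagonal_mul_diagonal, show (fun i => d i * (starRingEnd ℂ) (d i))
      = fun _ : V => (1 : ℂ) from funext hone, Matrix.diagonal_one]
  have hDcD : Dc * D = 1 := by
    rw [hD, hDc, Matrix.diagonal_mul_diagonal, show (fun i => (starRingEnd ℂ) (d i) * d i)
      = fun _ : V => (1 : ℂ) from funext hone', Matrix.diagonal_one]
  have hconj : Dc * Hα * D = H₀ := by
    ext a b
    rw [hH₀]
    show ((Dc * Hα) * D) a b = _
    rw [hD, Matrix.mul_diagonal, hDc, Matrix.diagonal_mul]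
    show _ = if T.Adj a b then (1 : ℂ) else 0
    by_cases hab : T.Adj a b
    · rw [if_pos hab]
      exact hkey a b hab
    · rw [if_neg hab]
      by_cases heq : a = b
      · subst heq; rw [hdiag a]; ring
      · rw [hsupp a b heq hab]; ring
  have hHα : Hα = D * H₀ * Dc := by
    rw [← hconj]
    calc Hα = 1 * Hα * 1 := by rw [one_mul, mul_one]
      _ = (D * Dc) * Hα * (D * Dc) := by rw [hDDc]
      _ = D * (Dc * Hα * D) * Dc := by noncomm_ring
  intro t a b
  have hsmul : (Complex.I * t) • Hα = D * ((Complex.I * t) • H₀) * Dc := by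
    rw [hHα, Matrix.mul_smul, Matrix.smul_mul]
  set U : (Matrix V V ℂ)ˣ := ⟨D, Dc, hDDc, hDcD⟩ with hU
  have hUeq : (↑U : Matrix V V ℂ) = D := rfl
  have hUinv : (↑U⁻¹ : Matrix V V ℂ) = Dc := rfl
  have hexp : NormedSpace.exp ((Complex.I * t) • Hα) =
      D * NormedSpace.exp ((Complex.I * t) • H₀) * Dc := by
    rw [hsmul, ← hUeq, ← hUinv, Matrix.exp_units_conj]
  rw [hexp]
  have hentry : (D * NormedSpace.exp ((Complex.I * t) • H₀) * Dc) b a =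
      d b * NormedSpace.exp ((Complex.I * t) • H₀) b a * (starRingEnd ℂ) (d a) := by
    rw [hD, hDc, Matrix.mul_diagonal, Matrix.diagonal_mul]
  rw [hentry, norm_mul, norm_mul, habsd b, Complex.norm_conj, habsd a,
    one_mul, mul_one]
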